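/- The Apéry numbers q_n = ∑_{k=0}^n C(n+k,k)² C(n,k)² satisfy the recurrence (n+2)³ q_{n+2} − (2n+3)(17n²+51n+39) q_{n+1} + (n+1)³ q_n = 0 for all n ≥ 0. -/

import Mathlib

open Finset

/-- The Apéry numbers. -/
def aperyQ (n : ℕ) : ℤ :=
  ∑ k ∈ Finset.range (n + 1), ((n + k).choose k : ℤ) ^ 2 * (n.choose k : ℤ) ^ 2

lemma binQ1 (m k : ℕ) :
    ((m:ℚ) + 1 - k) * ((m+1).choose k : ℚ) = ((m:ℚ) + 1) * (m.choose k : ℚ) := by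
  rcases le_or_gt k (m+1) with h | h
  · have h0 := Nat.choose_mul_succ_eq m k
    qify [h] at h0
    linarith
  · rw [Nat.choose_eq_zero_of_lt h, Nat.choose_eq_zero_of_lt (by omega)]
    simp

lemma binQ2 (m k : ℕ) :
    ((k:ℚ) + 1) * (m.choose (k+1) : ℚ) = ((m:ℚ) - k) * (m.choose k : ℚ) := by
  rcases le_or_gt k m with h | h
  · have h0 := Nat.choose_succ_right_eq m k
    qify [h] at h0
    linarith
  · rw [Nat.choose_eq_zero_of_lt h, Nat.choose_eq_zero_of_lt (by omega)]
    simp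

lemma binQ3 (m k : ℕ) :
    ((m:ℚ) + 1) * ((m+k+1).choose k : ℚ) = ((m:ℚ) + k + 1) * ((m+k).choose k : ℚ) := by
  have h0 := Nat.add_one_mul_choose_eq (m+k) m
  have s1 : (m+k).choose m = (m+k).choose k := by
    have h := Nat.choose_symm (n := m+k) (k := k) (Nat.le_add_left k m)
    simpa using h
  have s2 : (m+k+1).choose (m+1) = (m+k+1).choose k := by
    have h := Nat.choose_symm (n := m+k+1) (k := k) (by omega)
    have e : m+k+1-k = m+1 := by omega
    rw [e] at h
    exact h
  rw [s1, s2] at h0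
  qify at h0
  linarith

/-- The WZ-style certificate function. -/
def gCert (n k : ℕ) : ℚ :=
  (k:ℚ)^4 * (4*(2*(n:ℚ)+3)*(2*(k:ℚ)^2 - 3*(k:ℚ) - 4*((n:ℚ)+1)*((n:ℚ)+2)))
    * ((n+k).choose k : ℚ)^2 * ((n+2).choose k : ℚ)^2 / (((n:ℚ)+1)^2 * ((n:ℚ)+2)^2)

lemma keyStep (n k : ℕ) :
    ((n:ℚ)+2)^3 * (((n+2+k).choose k : ℚ)^2 * ((n+2).choose k : ℚ)^2)
      - (2*(n:ℚ)+3)*(17*(n:ℚ)^2+51*(n:ℚ)+39)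
        * (((n+1+k).choose k : ℚ)^2 * ((n+1).choose k : ℚ)^2)
      + ((n:ℚ)+1)^3 * (((n+k).choose k : ℚ)^2 * (n.choose k : ℚ)^2)
    = gCert n (k+1) - gCert n k := by
  have hn1 : ((n:ℚ)+1) ≠ 0 := by positivity
  have hn2 : ((n:ℚ)+2) ≠ 0 := by positivity
  have hk1 : ((k:ℚ)+1) ≠ 0 := by positivity
  have i2 : n+2+k = n+k+2 := by omega
  have i1 : n+1+k = n+k+1 := by omega
  have i3 : n+(k+1) = n+k+1 := by omega
  rw [i2, i1]
  simp only [gCert, i3]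
  -- basic relations
  have h1 : ((n:ℚ)+2-(k:ℚ)) * ((n+2).choose k : ℚ) = ((n:ℚ)+2) * ((n+1).choose k : ℚ) := by
    have := binQ1 (n+1) k
    push_cast at this
    linarith
  have h2 : ((n:ℚ)+1-(k:ℚ)) * ((n+1).choose k : ℚ) = ((n:ℚ)+1) * (n.choose k : ℚ) := by
    have := binQ1 n k
    push_cast at this
    linarith
  have h3 : ((n:ℚ)+1) * ((n+k+1).choose k : ℚ) = ((n:ℚ)+k+1) * ((n+k).choose k : ℚ) := by
    have := binQ3 n k
    push_cast at this
    linarith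
  have h4 : ((n:ℚ)+2) * ((n+k+2).choose k : ℚ) = ((n:ℚ)+k+2) * ((n+k+1).choose k : ℚ) := by
    have := binQ3 (n+1) k
    have e : n+1+k+1 = n+k+2 := by omega
    have e2 : n+1+k = n+k+1 := by omega
    rw [e, e2] at this
    push_cast at this
    linarith
  have h5 : ((k:ℚ)+1) * ((n+2).choose (k+1) : ℚ) = ((n:ℚ)+2-(k:ℚ)) * ((n+2).choose k : ℚ) := by
    have := binQ2 (n+2) k
    push_cast at this
    linarith
  have h6 : ((k:ℚ)+1) * ((n+k+1).choose (k+1) : ℚ) = ((n:ℚ)+1) * ((n+k+1).choose k : ℚ) := by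
    have := binQ2 (n+k+1) k
    push_cast at this
    linarith
  -- solved forms
  have hb : ((n+1).choose k : ℚ) = ((n:ℚ)+2-(k:ℚ)) * ((n+2).choose k : ℚ) / ((n:ℚ)+2) := by
    rw [eq_div_iff hn2]; linarith
  have ha : (n.choose k : ℚ)
      = ((n:ℚ)+1-(k:ℚ)) * ((n:ℚ)+2-(k:ℚ)) * ((n+2).choose k : ℚ) / (((n:ℚ)+1)*((n:ℚ)+2)) := by
    rw [eq_div_iff (by positivity)]
    linear_combination (-((n:ℚ)+2)) * h2 - ((n:ℚ)+1-(k:ℚ)) * h1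
  have hv : ((n+k+1).choose k : ℚ) = ((n:ℚ)+k+1) * ((n+k).choose k : ℚ) / ((n:ℚ)+1) := by
    rw [eq_div_iff hn1]; linarith
  have hz : ((n+k+2).choose k : ℚ)
      = ((n:ℚ)+k+1) * ((n:ℚ)+k+2) * ((n+k).choose k : ℚ) / (((n:ℚ)+1)*((n:ℚ)+2)) := by
    rw [eq_div_iff (by positivity)]
    linear_combination ((n:ℚ)+1) * h4 + ((n:ℚ)+k+2) * h3
  have hp : ((n+2).choose (k+1) : ℚ) = ((n:ℚ)+2-(k:ℚ)) * ((n+2).choose k : ℚ) / ((k:ℚ)+1) := by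
    rw [eq_div_iff hk1]; linarith
  have hw : ((n+k+1).choose (k+1) : ℚ)
      = ((n:ℚ)+k+1) * ((n+k).choose k : ℚ) / ((k:ℚ)+1) := by
    rw [eq_div_iff hk1]
    linear_combination h6 + h3
  rw [hz, hv, ha, hb, hp, hw]
  push_cast
  field_simp
  ring

theorem apery_recurrence (n : ℕ) :
    ((n : ℤ) + 2) ^ 3 * aperyQ (n + 2)
      - (2 * (n : ℤ) + 3) * (17 * (n : ℤ) ^ 2 + 51 * n + 39) * aperyQ (n + 1)
      + ((n : ℤ) + 1) ^ 3 * aperyQ n = 0 := by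
  have e2 : ((aperyQ (n+2) : ℚ))
      = ∑ k ∈ range (n+3), ((n+2+k).choose k : ℚ)^2 * ((n+2).choose k : ℚ)^2 := by
    unfold aperyQ
    push_cast
    norm_num [show n+2+1 = n+3 from rfl]
  have e1 : ((aperyQ (n+1) : ℚ))
      = ∑ k ∈ range (n+3), ((n+1+k).choose k : ℚ)^2 * ((n+1).choose k : ℚ)^2 := by
    unfold aperyQ
    push_cast
    conv_rhs => rw [show n+3 = n+1+1+1 from rfl, Finset.sum_range_succ]
    rw [Nat.choose_eq_zero_of_lt (show n+1 < n+1+1 by omega)]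
    push_cast
    ring
  have e0 : ((aperyQ n : ℚ))
      = ∑ k ∈ range (n+3), ((n+k).choose k : ℚ)^2 * (n.choose k : ℚ)^2 := by
    unfold aperyQ
    push_cast
    conv_rhs => rw [show n+3 = n+1+1+1 from rfl, Finset.sum_range_succ, Finset.sum_range_succ]
    rw [Nat.choose_eq_zero_of_lt (show n < n+1+1 by omega),
        Nat.choose_eq_zero_of_lt (show n < n+1 by omega)]
    push_cast
    ring
  have sumQ : ((n:ℚ)+2)^3 * (aperyQ (n+2) : ℚ)
      - (2*(n:ℚ)+3)*(17*(n:ℚ)^2+51*(n:ℚ)+39) * (aperyQ (n+1) : ℚ)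
      + ((n:ℚ)+1)^3 * (aperyQ n : ℚ) = 0 := by
    rw [e2, e1, e0, Finset.mul_sum, Finset.mul_sum, Finset.mul_sum,
        ← Finset.sum_sub_distrib, ← Finset.sum_add_distrib]
    have hsum : ∑ k ∈ range (n+3),
        (((n:ℚ)+2)^3 * (((n+2+k).choose k : ℚ)^2 * ((n+2).choose k : ℚ)^2)
          - (2*(n:ℚ)+3)*(17*(n:ℚ)^2+51*(n:ℚ)+39)
            * (((n+1+k).choose k : ℚ)^2 * ((n+1).choose k : ℚ)^2)
          + ((n:ℚ)+1)^3 * (((n+k).choose k : ℚ)^2 * (n.choose k : ℚ)^2))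
        = ∑ k ∈ range (n+3), (gCert n (k+1) - gCert n k) :=
      Finset.sum_congr rfl (fun k _ => keyStep n k)
    rw [show (∑ k ∈ range (n+3),
        (((n:ℚ)+2)^3 * (((n+2+k).choose k : ℚ)^2 * ((n+2).choose k : ℚ)^2)
          - (2*(n:ℚ)+3)*(17*(n:ℚ)^2+51*(n:ℚ)+39)
            * (((n+1+k).choose k : ℚ)^2 * ((n+1).choose k : ℚ)^2)
          + ((n:ℚ)+1)^3 * (((n+k).choose k : ℚ)^2 * (n.choose k : ℚ)^2)))
        = gCert n (n+3) - gCert n 0 from by rw [hsum, Finset.sum_range_sub]]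
    have g0 : gCert n 0 = 0 := by simp [gCert]
    have gtop : gCert n (n+3) = 0 := by
      have hc : (n+2).choose (n+3) = 0 := Nat.choose_eq_zero_of_lt (by omega)
      simp [gCert, hc]
    rw [g0, gtop]
    ring
  exact_mod_cast sumQ
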